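/- Let H be a real Hilbert space and K ⊆ H. Let n ≥ 1 and m ≥ 1 be integers and let v_1, …, v_{m+n−1} ∈ K be arbitrary. Set V_0 := {0} and V_i := span{v_1, …, v_i}. If the closed absolutely convex hull acx(K) admits an (n, ε)-cover, then ∏_{i=m}^{m+n−1} ‖v_i − Π_{V_{i−1}} v_i‖ ≤ n! · S_n · ε^n, where S_n := π^{n/2} / Γ(n/2 + 1) is the volume of the unit ball in ℝ^n and Π_W denotes the orthogonal projection onto the subspace W. -/

import Mathlib

open scoped RealInnerProductSpace ENNReal

variable {H : Type*} [NormedAddCommGroup H] [InnerProductSpace ℝ H]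

/-- Orthogonal projection of `w` onto `V_i = span {v_1, …, v_i}` (with `V_0 = {0}`). -/
noncomputable def projSeq (v : ℕ → H) (i : ℕ) (w : H) : H :=
  haveI : FiniteDimensional ℝ (Submodule.span ℝ (v '' Set.Icc 1 i)) :=
    FiniteDimensional.span_of_finite ℝ ((Set.finite_Icc 1 i).image v)
  (Submodule.orthogonalProjectionOnto (Submodule.span ℝ (v '' Set.Icc 1 i)) w : H)

/-- The closed absolutely convex (symmetric convex) hull of `K`. -/
def acx (K : Set H) : Set H :=
  closure {y : H | ∃ (m : ℕ) (c : Fin m → ℝ) (g : Fin m → H),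
    (∀ j, g j ∈ K) ∧ (∑ j, |c j|) ≤ 1 ∧ y = ∑ j, c j • g j}

/-- `S` admits an `(n, ε)`-cover: it can be covered by at most `2^n` closed balls of
radius `ε`. -/
def HasCover (S : Set H) (n : ℕ) (ε : ℝ) : Prop :=
  ∃ (q : ℕ) (y : Fin q → H), q ≤ 2 ^ n ∧ S ⊆ ⋃ j, Metric.closedBall (y j) ε

lemma projSeq_sub_mem_orthogonal (v : ℕ → H) (i : ℕ) (x : H) :
    x - projSeq v i x ∈ (Submodule.span ℝ (v '' Set.Icc 1 i))ᗮ := by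
  haveI : FiniteDimensional ℝ (Submodule.span ℝ (v '' Set.Icc 1 i)) :=
    FiniteDimensional.span_of_finite ℝ ((Set.finite_Icc 1 i).image v)
  exact Submodule.sub_starProjection_mem_orthogonal x

lemma projSeq_mem (v : ℕ → H) (i : ℕ) (x : H) :
    projSeq v i x ∈ Submodule.span ℝ (v '' Set.Icc 1 i) := by
  haveI : FiniteDimensional ℝ (Submodule.span ℝ (v '' Set.Icc 1 i)) :=
    FiniteDimensional.span_of_finite ℝ ((Set.finite_Icc 1 i).image v)
  unfold projSeq
  exact SetLike.coe_mem _

theorem statement_0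
    (K : Set H) (n m : ℕ) (hn : 1 ≤ n) (hm : 1 ≤ m)
    (v : ℕ → H) (hv : ∀ i, 1 ≤ i → i ≤ m + n - 1 → v i ∈ K)
    (ε : ℝ) (hcov : HasCover (acx K) n ε) :
    ∏ i ∈ Finset.Icc m (m + n - 1), ‖v i - projSeq v (i - 1) (v i)‖
      ≤ (n.factorial : ℝ) * (Real.pi ^ ((n : ℝ) / 2) / Real.Gamma ((n : ℝ) / 2 + 1))
        * ε ^ n := by
  classical
  haveI : Nonempty (Fin n) := ⟨⟨0, hn⟩⟩
  obtain ⟨q, y, hq, hsub⟩ := hcov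
  -- ε is nonnegative
  have h0K : (0 : H) ∈ acx K := by
    apply subset_closure
    exact ⟨0, (fun j => 0), (fun j => 0), fun j => j.elim0, by simp, by simp⟩
  have hε : 0 ≤ ε := by
    obtain ⟨j, hj⟩ := Set.mem_iUnion.mp (hsub h0K)
    exact le_trans dist_nonneg (Metric.mem_closedBall.mp hj)
  have hΓ : 0 < Real.Gamma ((n : ℝ) / 2 + 1) := Real.Gamma_pos_of_pos (by positivity)
  set d : Fin n → ℝ := fun j => ‖v (m + (j : ℕ)) - projSeq v (m + (j : ℕ) - 1) (v (m + (j : ℕ)))‖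
    with hd
  -- reindex the product
  have hprod : ∏ i ∈ Finset.Icc m (m + n - 1), ‖v i - projSeq v (i - 1) (v i)‖
      = ∏ j : Fin n, d j := by
    have h1 : Finset.Icc m (m + n - 1) = Finset.Ico m (m + n) := by
      ext x; simp only [Finset.mem_Icc, Finset.mem_Ico]; omega
    rw [h1, Finset.prod_Ico_eq_prod_range, show m + n - m = n by omega,
      ← Fin.prod_univ_eq_prod_range]
  rw [hprod]
  -- trivial case: some factor vanishes
  by_cases hpos : ∀ j : Fin n, 0 < d j
  swap
  · push_neg at hpos
    obtain ⟨j, hj⟩ := hpos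
    have hj0 : d j = 0 := le_antisymm hj (norm_nonneg _)
    rw [Finset.prod_eq_zero (Finset.mem_univ j) hj0]
    positivity
  -- setup
  set V : ℕ → Submodule ℝ H := fun i => Submodule.span ℝ (v '' Set.Icc 1 i) with hV
  set w : Fin n → H :=
    fun j => v (m + (j : ℕ)) - projSeq v (m + (j : ℕ) - 1) (v (m + (j : ℕ))) with hw
  have hw_orth : ∀ j : Fin n, w j ∈ (V (m + (j : ℕ) - 1))ᗮ :=
    fun j => projSeq_sub_mem_orthogonal v _ _
  have hVmono : ∀ {a b : ℕ}, a ≤ b → V a ≤ V b := fun h =>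
    Submodule.span_mono (Set.image_mono (Set.Icc_subset_Icc_right h))
  have hw_mem : ∀ j : Fin n, w j ∈ V (m + (j : ℕ)) := by
    intro j
    have h1 : v (m + (j : ℕ)) ∈ V (m + (j : ℕ)) :=
      Submodule.subset_span ⟨m + (j : ℕ), ⟨by omega, le_rfl⟩, rfl⟩
    exact Submodule.sub_mem _ h1 (hVmono (by omega) (projSeq_mem v _ _))
  set e : Fin n → H := fun j => (d j)⁻¹ • w j with he
  have he_orth : ∀ j : Fin n, e j ∈ (V (m + (j : ℕ) - 1))ᗮ :=
    fun j => Submodule.smul_mem _ _ (hw_orth j)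
  have he_mem : ∀ j : Fin n, e j ∈ V (m + (j : ℕ)) := fun j => Submodule.smul_mem _ _ (hw_mem j)
  have hinner_zero : ∀ (j : Fin n) (x : H), x ∈ V (m + (j : ℕ) - 1) → ⟪e j, x⟫ = 0 := by
    intro j x hx
    rw [real_inner_comm]
    exact (Submodule.mem_orthogonal _ _).mp (he_orth j) x hx
  have he_norm : ∀ j, ‖e j‖ = 1 := by
    intro j
    rw [he]
    rw [norm_smul, norm_inv, Real.norm_eq_abs, abs_of_pos (hpos j)]
    exact inv_mul_cancel₀ (hpos j).ne'
  have horth : Orthonormal ℝ e := by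
    refine ⟨he_norm, ?_⟩
    have key : ∀ i j : Fin n, (i : ℕ) < (j : ℕ) → ⟪e j, e i⟫ = 0 := by
      intro i j hij
      exact hinner_zero j _ (hVmono (by omega) (he_mem i))
    intro i j hij
    rcases lt_or_gt_of_ne (fun h : (i : ℕ) = (j : ℕ) => hij (Fin.ext h)) with h | h
    · rw [real_inner_comm]; exact key i j h
    · exact key j i h
  have hdiag : ∀ j : Fin n, ⟪e j, v (m + (j : ℕ))⟫ = d j := by
    intro j
    have hsplit : v (m + (j : ℕ)) = w j + projSeq v (m + (j : ℕ) - 1) (v (m + (j : ℕ))) :=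
      (sub_add_cancel _ _).symm
    rw [hsplit, inner_add_right, hinner_zero j _ (projSeq_mem v _ _), add_zero, he,
      real_inner_smul_left, real_inner_self_eq_norm_sq]
    have : ‖w j‖ = d j := rfl
    rw [this, sq, ← mul_assoc, inv_mul_cancel₀ (hpos j).ne', one_mul]
  -- the coordinate map and test map
  set F : H →ₗ[ℝ] EuclideanSpace ℝ (Fin n) :=
    (WithLp.linearEquiv 2 ℝ (Fin n → ℝ)).symm.toLinearMap ∘ₗ
      LinearMap.pi (fun j : Fin n => (innerSL ℝ (e j)).toLinearMap) with hF
  have hF_apply : ∀ (x : H) (j : Fin n), F x j = ⟪e j, x⟫ := fun x j => rfl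
  have hF_lip : ∀ z : H, ‖F z‖ ≤ ‖z‖ := by
    intro z
    rw [EuclideanSpace.norm_eq]
    have h1 : ∑ i : Fin n, ‖⟪e i, z⟫‖ ^ 2 ≤ ‖z‖ ^ 2 :=
      horth.sum_inner_products_le (x := z) (s := Finset.univ)
    calc Real.sqrt (∑ i, ‖F z i‖ ^ 2) ≤ Real.sqrt (‖z‖ ^ 2) :=
          Real.sqrt_le_sqrt (by simpa [hF_apply] using h1)
      _ = ‖z‖ := Real.sqrt_sq (norm_nonneg z)
  set L : EuclideanSpace ℝ (Fin n) →ₗ[ℝ] H :=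
    (Fintype.linearCombination ℝ fun j : Fin n => v (m + (j : ℕ))) ∘ₗ
      (WithLp.linearEquiv 2 ℝ (Fin n → ℝ)).toLinearMap with hL
  have hL_apply : ∀ c : EuclideanSpace ℝ (Fin n), L c = ∑ j : Fin n, c j • v (m + (j : ℕ)) :=
    fun c => rfl
  set T : EuclideanSpace ℝ (Fin n) →ₗ[ℝ] EuclideanSpace ℝ (Fin n) := F ∘ₗ L with hT
  have hdetT : LinearMap.det T = ∏ j, d j := by
    have hM : LinearMap.toMatrix (PiLp.basisFun 2 ℝ (Fin n)) (PiLp.basisFun 2 ℝ (Fin n)) T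
        = Matrix.of fun i j : Fin n => ⟪e i, v (m + (j : ℕ))⟫ := by
      ext i j
      rw [LinearMap.toMatrix_apply, PiLp.basisFun_repr]
      have hLb : L ((PiLp.basisFun 2 ℝ (Fin n)) j) = v (m + (j : ℕ)) := by
        rw [hL_apply]
        simp [PiLp.basisFun_apply, Pi.single_apply, ite_smul]
      show T _ i = _
      rw [hT, LinearMap.comp_apply, hLb, hF_apply]
      rfl
    rw [← LinearMap.det_toMatrix (PiLp.basisFun 2 ℝ (Fin n)), hM]
    have htri : (Matrix.of fun i j : Fin n => ⟪e i, v (m + (j : ℕ))⟫).BlockTriangular id := by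
      intro i j hij
      exact hinner_zero i _
        (Submodule.subset_span ⟨m + (j : ℕ), ⟨by omega, by
          simp only [id] at hij; omega⟩, rfl⟩)
    rw [Matrix.det_of_upperTriangular htri]
    exact Finset.prod_congr rfl fun j _ => hdiag j
  -- the ℓ¹ ball and its volume
  set B : Set (EuclideanSpace ℝ (Fin n)) :=
    (MeasurableEquiv.toLp 2 (Fin n → ℝ)).symm ⁻¹' {x : Fin n → ℝ | ∑ i, |x i| ≤ 1} with hB
  have hΓ2 : Real.Gamma 2 = 1 := by
    rw [show (2 : ℝ) = (1 : ℕ) + 1 by norm_num, Real.Gamma_nat_eq_factorial]; simp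
  have hBvol : MeasureTheory.volume B = ENNReal.ofReal (2 ^ n / n.factorial) := by
    rw [hB, (EuclideanSpace.volume_preserving_symm_measurableEquiv_toLp (Fin n)).measure_preimage_equiv]
    have h1 := MeasureTheory.volume_sum_rpow_le (ι := Fin n) (p := 1) le_rfl 1
    simp only [Real.rpow_one, one_div_one, Real.rpow_natCast] at h1
    rw [h1, Fintype.card_fin]
    norm_num [hΓ2]
    rw [show (n : ℝ) + 1 = (n : ℕ) + 1 by norm_num, Real.Gamma_nat_eq_factorial]
  have hsubset : T '' B ⊆ ⋃ j, Metric.closedBall (F (y j)) ε := by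
    rintro _ ⟨c, hc, rfl⟩
    have hc' : (∑ j : Fin n, |c j|) ≤ 1 := hc
    have hLc : L c ∈ acx K := by
      apply subset_closure
      exact ⟨n, fun j => c j, fun j => v (m + (j : ℕ)),
        fun j => hv _ (by omega) (by have := j.isLt; omega), hc', hL_apply c⟩
    obtain ⟨j, hj⟩ := Set.mem_iUnion.mp (hsub hLc)
    refine Set.mem_iUnion.mpr ⟨j, ?_⟩
    rw [Metric.mem_closedBall] at hj ⊢
    calc dist (T c) (F (y j)) = ‖F (L c) - F (y j)‖ := by rw [dist_eq_norm]; rfl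
      _ = ‖F (L c - y j)‖ := by rw [map_sub]
      _ ≤ ‖L c - y j‖ := hF_lip _
      _ = dist (L c) (y j) := (dist_eq_norm _ _).symm
      _ ≤ ε := hj
  -- volume comparison
  have hdnn : (0 : ℝ) ≤ ∏ j, d j := Finset.prod_nonneg fun j _ => (hpos j).le
  have hvol : ENNReal.ofReal ((∏ j, d j) * (2 ^ n / n.factorial))
      ≤ ENNReal.ofReal ((2 : ℝ) ^ n *
          (ε ^ n * (Real.sqrt Real.pi ^ n / Real.Gamma ((n : ℝ) / 2 + 1)))) := by
    rw [ENNReal.ofReal_mul hdnn, ENNReal.ofReal_mul (by positivity)]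
    calc ENNReal.ofReal (∏ j, d j) * ENNReal.ofReal (2 ^ n / n.factorial)
        = ENNReal.ofReal |LinearMap.det T| * MeasureTheory.volume B := by
          rw [hdetT, hBvol, abs_of_nonneg hdnn]
      _ = MeasureTheory.volume (T '' B) :=
          (MeasureTheory.Measure.addHaar_image_linearMap _ T B).symm
      _ ≤ MeasureTheory.volume (⋃ j, Metric.closedBall (F (y j)) ε) :=
          MeasureTheory.measure_mono hsubset
      _ ≤ ∑ j : Fin q, MeasureTheory.volume (Metric.closedBall (F (y j)) ε) :=
          MeasureTheory.measure_iUnion_fintype_le _ _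
      _ = (q : ℝ≥0∞) * (ENNReal.ofReal ε ^ n *
            ENNReal.ofReal (Real.sqrt Real.pi ^ n / Real.Gamma ((n : ℝ) / 2 + 1))) := by
          simp [EuclideanSpace.volume_closedBall, Finset.sum_const, Fintype.card_fin]
      _ ≤ ((2 : ℝ≥0∞) ^ n) * (ENNReal.ofReal ε ^ n *
            ENNReal.ofReal (Real.sqrt Real.pi ^ n / Real.Gamma ((n : ℝ) / 2 + 1))) := by
          gcongr
          exact_mod_cast hq
      _ = ENNReal.ofReal ((2 : ℝ) ^ n) * ENNReal.ofReal (ε ^ n *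
            (Real.sqrt Real.pi ^ n / Real.Gamma ((n : ℝ) / 2 + 1))) := by
          rw [ENNReal.ofReal_mul (by positivity), ← ENNReal.ofReal_pow hε,
            ENNReal.ofReal_pow (by norm_num : (0:ℝ) ≤ 2), ENNReal.ofReal_ofNat]
  have hreal := (ENNReal.ofReal_le_ofReal_iff (by positivity)).mp hvol
  have hsqrt : Real.sqrt Real.pi ^ n = Real.pi ^ ((n : ℝ) / 2) := by
    rw [Real.sqrt_eq_rpow, ← Real.rpow_natCast (Real.pi ^ ((1 : ℝ) / 2)) n,
      ← Real.rpow_mul Real.pi_pos.le]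
    congr 1
    ring
  have hfact : (0 : ℝ) < n.factorial := by exact_mod_cast n.factorial_pos
  have h2n : (0 : ℝ) < 2 ^ n := by positivity
  rw [← hsqrt]
  calc (∏ j, d j)
      = ((∏ j, d j) * (2 ^ n / n.factorial)) * (n.factorial / 2 ^ n) := by
        field_simp
    _ ≤ ((2 : ℝ) ^ n * (ε ^ n * (Real.sqrt Real.pi ^ n / Real.Gamma ((n : ℝ) / 2 + 1))))
          * (n.factorial / 2 ^ n) := by
        apply mul_le_mul_of_nonneg_right hreal (by positivity)
    _ = (n.factorial : ℝ) * (Real.sqrt Real.pi ^ n / Real.Gamma ((n : ℝ) / 2 + 1)) * ε ^ n := by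
        field_simp
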